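/- Let n ≥ 3, β ≥ n, q > 1 with qβ > n - 1, and set a = (n - qβ)/2, b = n - 1 - qβ/2, c = n/2. Then for all 0 ≤ r < 1, F(a, b; c; r) ≤ max(1, Γ(n/2)Γ(qβ - n + 1)/(Γ(qβ/2)Γ((qβ - n + 2)/2))); i.e., the supremum of F(a,b;c;·) on [0,1) is attained at an endpoint. -/

import Mathlib

open Real

/-- Pochhammer symbol `(a)_k = Γ(a+k)/Γ(a)`. -/
noncomputable def Poch (a : ℝ) (k : ℕ) : ℝ := Real.Gamma (a + k) / Real.Gamma a

/-- Gauss hypergeometric function `F(a,b;c;x)`. -/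
noncomputable def Hyp (a b c x : ℝ) : ℝ :=
  ∑' k : ℕ, Poch a k * Poch b k / Poch c k * x ^ k / (Nat.factorial k : ℝ)


open Real Filter Finset Topology

/-- recursive Pochhammer -/
noncomputable def pk (x : ℝ) : ℕ → ℝ
  | 0 => 1
  | k+1 => pk x k * (x + k)

@[simp] lemma pk_zero (x : ℝ) : pk x 0 = 1 := rfl
lemma pk_succ (x : ℝ) (k : ℕ) : pk x (k+1) = pk x k * (x + k) := rfl

lemma pk_pos {x : ℝ} (hx : 0 < x) (k : ℕ) : 0 < pk x k := by
  induction k with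
  | zero => norm_num [pk]
  | succ k ih => rw [pk_succ]; positivity

lemma pk_succ_left (x : ℝ) (k : ℕ) : pk x (k+1) = x * pk (x+1) k := by
  induction k with
  | zero => simp [pk]
  | succ k ih =>
      rw [pk_succ, ih, pk_succ]
      push_cast; ring

lemma pk_add (x : ℝ) (j m : ℕ) : pk x (j + m) = pk x j * pk (x + j) m := by
  induction m with
  | zero => simp [pk]
  | succ m ih =>
      have : j + (m+1) = (j + m) + 1 := by omega
      rw [this, pk_succ, ih, pk_succ]
      push_cast; ring

lemma pk_abs_le (x : ℝ) (k : ℕ) : |pk x k| ≤ pk (|x|) k := by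
  induction k with
  | zero => simp [pk]
  | succ k ih =>
      rw [pk_succ, pk_succ, abs_mul]
      have h1 : |x + (k:ℝ)| ≤ |x| + k := by
        simpa [Nat.abs_cast] using abs_add_le x (k:ℝ)
      have h2 : (0:ℝ) ≤ |x| + k := by positivity
      exact mul_le_mul ih h1 (abs_nonneg _) ((abs_nonneg _).trans ih)

lemma pk_mono {x y : ℝ} (hx : 0 ≤ x) (hxy : x ≤ y) (k : ℕ) : pk x k ≤ pk y k := by
  induction k with
  | zero => simp [pk]
  | succ k ih =>
      rw [pk_succ, pk_succ]
      have h0 : 0 ≤ pk x k := by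
        rcases eq_or_lt_of_le hx with h|h
        · cases k with
          | zero => norm_num [pk]
          | succ k => rw [pk_succ_left, ← h]; simp
        · exact (pk_pos h k).le
      exact mul_le_mul ih (by linarith) (by positivity) (h0.trans ih)

lemma pk_one (k : ℕ) : pk 1 k = k.factorial := by
  induction k with
  | zero => simp [pk]
  | succ k ih => rw [pk_succ, ih, Nat.factorial_succ]; push_cast; ring

/-- conversion Poch = pk when Gamma x ≠ 0 -/
lemma gamma_arg_ne {x : ℝ} (hx : Real.Gamma x ≠ 0) (k : ℕ) : x + (k:ℝ) ≠ 0 := by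
  intro h
  have : x = -(k:ℝ) := by linarith
  exact hx (this ▸ Real.Gamma_neg_nat_eq_zero k)

lemma Poch_eq_pk {x : ℝ} (hx : Real.Gamma x ≠ 0) (k : ℕ) :
    Real.Gamma (x + k) / Real.Gamma x = pk x k := by
  induction k with
  | zero => simpa using div_self hx
  | succ k ih =>
      have h1 : x + ((k:ℝ)+1) = (x + k) + 1 := by ring
      rw [pk_succ, ← ih]
      push_cast
      rw [h1, Real.Gamma_add_one (gamma_arg_ne hx k)]
      field_simp

/-- Pfaff–Saalschütz-type identity -/
lemma saal (a b c : ℝ) (hc : ∀ j : ℕ, c + (j:ℝ) ≠ 0) (k : ℕ) :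
    ∑ j ∈ range (k+1), (Nat.choose k j : ℝ) * pk a j * pk b j *
      pk (c-a-b) (k-j) * pk (c+j) (k-j) = pk (c-a) k * pk (c-b) k := by
  induction k with
  | zero => simp [pk]
  | succ k ih =>
    set s : ℝ := c - a - b with hs
    set f : ℕ → ℝ := fun j => (Nat.choose k j : ℝ) * pk a j * pk b j *
      pk s (k-j) * pk (c+j) (k-j) with hfdef
    set f' : ℕ → ℝ := fun j => (Nat.choose k j : ℝ) * pk a j * pk b j *
      pk s (k+1-j) * pk (c+j) (k+1-j) with hf'def
    set g : ℕ → ℝ := fun i => (Nat.choose k i : ℝ) * pk a (i+1) * pk b (i+1) *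
      pk s (k-i) * pk (c+(i+1:ℕ)) (k-i) with hgdef
    set v : ℕ → ℝ := fun i => (i:ℝ) * (s + k - i) * f i with hvdef
    have hftop : f (k+1) = 0 := by
      simp [hfdef, Nat.choose_succ_self]
    have hf'top : f' (k+1) = 0 := by
      simp [hf'def, Nat.choose_succ_self]
    -- Pascal split
    have hA : ∑ j ∈ range (k+2), (Nat.choose (k+1) j : ℝ) * pk a j * pk b j *
        pk s (k+1-j) * pk (c+j) (k+1-j)
        = ∑ j ∈ range (k+2), f' j + ∑ i ∈ range (k+1), g i := by
      rw [Finset.sum_range_succ' _ (k+1), Finset.sum_range_succ' f' (k+1)]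
      have h0 : (Nat.choose (k+1) 0 : ℝ) * pk a 0 * pk b 0 *
          pk s (k+1-0) * pk (c+((0:ℕ):ℝ)) (k+1-0) = f' 0 := by
        simp [hf'def]
      have hmain : ∀ i ∈ range (k+1), ((k+1).choose (i+1) : ℝ) * pk a (i+1) * pk b (i+1) *
          pk s (k+1-(i+1)) * pk (c+((i+1:ℕ):ℝ)) (k+1-(i+1)) = f' (i+1) + g i := by
        intro i hi
        have he : k + 1 - (i+1) = k - i := by omega
        have hch : ((k+1).choose (i+1) : ℝ) = (k.choose i : ℝ) + (k.choose (i+1) : ℝ) := by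
          rw [Nat.choose_succ_succ]; push_cast; ring
        simp only [hf'def, hgdef, he, hch]
        ring
      rw [Finset.sum_congr rfl hmain, Finset.sum_add_distrib, h0]
      ring
    -- first part rewrite
    have hB : ∀ j ∈ range (k+1), f' j = f j * ((s + (k:ℝ) - j) * (c + (k:ℝ))) := by
      intro j hj
      have hjk : j ≤ k := by simp at hj; omega
      have e1 : k + 1 - j = (k-j) + 1 := by omega
      have e2 : ((k-j : ℕ) : ℝ) = (k:ℝ) - j := by
        rw [Nat.cast_sub hjk]
      simp only [hf'def, hfdef, e1, pk_succ, e2]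
      ring
    -- second part rewrite
    have hG : ∀ j ∈ range (k+1), g j = f j * ((c+(k:ℝ))*(a+j)*(b+j) / (c+j)) := by
      intro j hj
      have hjk : j ≤ k := by simp at hj; omega
      have e2 : ((k-j : ℕ) : ℝ) = (k:ℝ) - j := by rw [Nat.cast_sub hjk]
      have key : (c+(j:ℝ)) * pk (c+(j:ℝ)+1) (k-j) = pk (c+(j:ℝ)) (k-j) * (c+(k:ℝ)) := by
        have h1 := pk_succ_left (c+(j:ℝ)) (k-j)
        have h2 := pk_succ (c+(j:ℝ)) (k-j)
        rw [h1] at h2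
        rw [h2, e2]; ring
      have ecast : (c + ((j+1:ℕ) : ℝ)) = c + (j:ℝ) + 1 := by push_cast; ring
      rw [eq_comm, mul_div_assoc', div_eq_iff (hc j)]
      simp only [hgdef, hfdef, ecast, pk_succ]
      linear_combination -(↑(k.choose j) * pk a j * (a+(j:ℝ)) * pk b j * (b+(j:ℝ)) * pk s (k-j)) * key
    -- telescoping certificate
    have hV : ∀ j ∈ range (k+1), ((j:ℝ)+1) * (s + (k:ℝ) - ((j:ℝ)+1)) * f (j+1)
        = ((k:ℝ) - j) * (a+j) * (b+j) * f j / (c+j) := by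
      intro j hj
      have hjk : j ≤ k := by simp at hj; omega
      rcases eq_or_lt_of_le hjk with hje | hjlt
      · subst hje
        rw [hftop]
        simp
      · -- j < k
        have hm : k - (j+1) + 1 = k - j := by omega
        have em : ((k - (j+1) : ℕ) : ℝ) = (k:ℝ) - j - 1 := by
          rw [Nat.cast_sub (by omega)]; push_cast; ring
        have hch : ((j:ℝ)+1) * (k.choose (j+1) : ℝ) = ((k:ℝ) - j) * (k.choose j : ℝ) := by
          have h2 : ((k.choose (j+1) * (j+1) : ℕ) : ℝ) = ((k.choose j * (k - j) : ℕ) : ℝ) := by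
            rw [Nat.choose_succ_right_eq k j]
          push_cast [Nat.cast_sub hjk] at h2
          linear_combination h2
        rw [eq_div_iff (hc j)]
        have e1 : pk s (k-j) = pk s (k-(j+1)) * (s + ((k:ℝ) - j - 1)) := by
          rw [← hm, pk_succ, em]
        have e2 : pk (c+(j:ℝ)) (k-j) = (c+(j:ℝ)) * pk (c+(j:ℝ)+1) (k-(j+1)) := by
          rw [← hm, pk_succ_left]
        have e3 : (c + ((j+1:ℕ) : ℝ)) = c + (j:ℝ) + 1 := by push_cast; ring
        simp only [hfdef, e3, pk_succ]
        rw [e1, e2]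
        linear_combination (pk a j * (a+(j:ℝ)) * pk b j * (b+(j:ℝ)) * pk s (k-(j+1))
          * pk (c+(j:ℝ)+1) (k-(j+1)) * (s + (k:ℝ) - ((j:ℝ)+1)) * (c+(j:ℝ))) * hch
    -- pointwise combination
    have hPW : ∀ j ∈ range (k+1),
        f j * ((s + (k:ℝ) - j) * (c + (k:ℝ))) + f j * ((c+(k:ℝ))*(a+j)*(b+j) / (c+j))
        = (c-a+(k:ℝ)) * (c-b+(k:ℝ)) * f j + (v (j+1) - v j) := by
      intro j hj
      have hv1 : v (j+1) = ((k:ℝ) - j) * (a+j) * (b+j) * f j / (c+j) := by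
        have := hV j hj
        simp only [hvdef]
        push_cast
        rw [← this]
      rw [hv1]
      simp only [hvdef, hs]
      have hcj := hc j
      field_simp
      ring
    -- assembly
    have hstep : ∑ j ∈ range (k+2), (Nat.choose (k+1) j : ℝ) * pk a j * pk b j *
        pk s (k+1-j) * pk (c+j) (k+1-j)
        = (c-a+(k:ℝ)) * (c-b+(k:ℝ)) * ∑ j ∈ range (k+1), f j := by
      rw [hA, Finset.sum_range_succ f' (k+1), hf'top, add_zero]
      have : ∑ j ∈ range (k+1), f' j + ∑ i ∈ range (k+1), g i
          = ∑ j ∈ range (k+1), ((c-a+(k:ℝ)) * (c-b+(k:ℝ)) * f j + (v (j+1) - v j)) := by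
        rw [← Finset.sum_add_distrib]
        apply Finset.sum_congr rfl
        intro j hj
        rw [hB j hj, hG j hj, hPW j hj]
      rw [this, Finset.sum_add_distrib, Finset.sum_range_sub v]
      have hv0 : v 0 = 0 := by simp [hvdef]
      have hvtop : v (k+1) = 0 := by simp [hvdef, hftop]
      rw [hv0, hvtop, sub_zero, add_zero, ← Finset.mul_sum]
    rw [hstep, ih, pk_succ, pk_succ]
    ring

lemma tendsto_linratio (α β : ℝ) :
    Tendsto (fun n : ℕ => (α + n) / (β + n)) atTop (𝓝 1) := by
  have h1 : Tendsto (fun n : ℕ => (β + (n:ℝ))) atTop atTop :=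
    tendsto_atTop_add_const_left _ β tendsto_natCast_atTop_atTop
  have h2 : Tendsto (fun n : ℕ => (α - β) / (β + n)) atTop (𝓝 0) :=
    Tendsto.div_atTop tendsto_const_nhds h1
  have h3 : Tendsto (fun n : ℕ => 1 + (α - β) / (β + n)) atTop (𝓝 1) := by
    simpa using tendsto_const_nhds.add h2
  apply h3.congr'
  have h4 : ∀ᶠ n : ℕ in atTop, (1:ℝ) ≤ β + n := by
    have := h1.eventually_ge_atTop 1
    exact this
  filter_upwards [h4] with n hn
  have hne : β + (n:ℝ) ≠ 0 := by linarith
  field_simp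
  ring

lemma summable_ratio_pos {u : ℕ → ℝ} (hpos : ∀ n, 0 < u n) {x : ℝ} (hx1 : x < 1)
    (hratio : Tendsto (fun n => u (n+1) / u n) atTop (𝓝 x)) : Summable u := by
  apply summable_of_ratio_test_tendsto_lt_one hx1
    (Eventually.of_forall fun n => (hpos n).ne')
  apply hratio.congr
  intro n
  rw [Real.norm_eq_abs, Real.norm_eq_abs, abs_of_pos (hpos n), abs_of_pos (hpos (n+1))]

/-- master summability -/
lemma summable_main {α β γ : ℝ} (hα : 0 < α) (hβ : 0 < β) (hγ : 0 < γ)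
    {x : ℝ} (hx0 : 0 < x) (hx1 : x < 1) :
    Summable (fun k => pk α k * pk β k / (pk γ k * k.factorial) * x ^ k) := by
  set u : ℕ → ℝ := fun k => pk α k * pk β k / (pk γ k * k.factorial) * x ^ k with hu
  have hpos : ∀ k, 0 < u k := by
    intro k
    have h1 := pk_pos hα k; have h2 := pk_pos hβ k; have h3 := pk_pos hγ k
    have h4 : (0:ℝ) < k.factorial := by exact_mod_cast k.factorial_pos
    positivity
  apply summable_ratio_pos hpos hx1
  have heq : ∀ n : ℕ, u (n+1) / u n = ((α + n) / (1 + n)) * ((β + n) / (γ + n)) * x := by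
    intro n
    have h1 := (pk_pos hα n).ne'; have h2 := (pk_pos hβ n).ne'; have h3 := (pk_pos hγ n).ne'
    have h4 : ((n.factorial : ℝ) ≠ 0) := by exact_mod_cast n.factorial_pos.ne'
    have h5 : (γ + (n:ℝ)) ≠ 0 := by positivity
    have h6 : (1 + (n:ℝ)) ≠ 0 := by positivity
    simp only [hu, pk_succ, Nat.factorial_succ, pow_succ]
    push_cast
    field_simp
    ring
  rw [show (𝓝 x) = 𝓝 (1 * 1 * x) by norm_num]
  exact Tendsto.congr (fun n => (heq n).symm)
    (((tendsto_linratio α 1).mul (tendsto_linratio β γ)).mul_const x)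

/-- summable variant: positive single-parameter series -/
lemma summable_pos_bin {γ R : ℝ} (hγ : 0 < γ) (hR0 : 0 < R) (hR1 : R < 1) :
    Summable (fun n => pk γ n * R ^ n / n.factorial) := by
  have := summable_main hγ one_pos one_pos hR0 hR1
  apply this.congr
  intro n
  rw [pk_one]
  have h4 : ((n.factorial : ℝ) ≠ 0) := by exact_mod_cast n.factorial_pos.ne'
  field_simp

/-- summable variant: shifted series for derivative bounds -/
lemma summable_shift {γ R : ℝ} (hγ : 0 < γ) (hR0 : 0 < R) (hR1 : R < 1) :
    Summable (fun n => pk γ (n+1) * R ^ n / n.factorial) := by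
  have hpos : ∀ n, 0 < pk γ (n+1) * R ^ n / n.factorial := by
    intro n
    have h1 := pk_pos hγ (n+1)
    have h4 : (0:ℝ) < n.factorial := by exact_mod_cast n.factorial_pos
    positivity
  apply summable_ratio_pos hpos hR1
  have heq : ∀ n : ℕ, (pk γ (n+2) * R ^ (n+1) / (n+1).factorial) / (pk γ (n+1) * R ^ n / n.factorial)
      = ((γ + 1 + n) / (1 + n)) * R := by
    intro n
    have h1 := (pk_pos hγ (n+1)).ne'
    have h4 : ((n.factorial : ℝ) ≠ 0) := by exact_mod_cast n.factorial_pos.ne'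
    have h6 : (1 + (n:ℝ)) ≠ 0 := by positivity
    rw [show pk γ (n+2) = pk γ (n+1) * (γ + ((n+1:ℕ):ℝ)) from pk_succ γ (n+1), Nat.factorial_succ, pow_succ]
    push_cast
    field_simp
    ring
  rw [show (𝓝 R) = 𝓝 (1 * R) by norm_num]
  exact Tendsto.congr (fun n => (heq n).symm) ((tendsto_linratio (γ+1) 1).mul_const R)

/-- summable bound series for derivatives -/
lemma summable_deriv_bound {γ R : ℝ} (hγ : 0 < γ) (hR0 : 0 < R) (hR1 : R < 1) :
    Summable (fun n => pk γ n * ((n:ℝ) * R ^ (n-1)) / n.factorial) := by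
  rw [← summable_nat_add_iff 1]
  apply (summable_shift hγ hR0 hR1).congr
  intro n
  have h4 : ((n.factorial : ℝ) ≠ 0) := by exact_mod_cast n.factorial_pos.ne'
  have h6 : ((n:ℝ) + 1) ≠ 0 := by positivity
  simp only [Nat.add_sub_cancel, Nat.factorial_succ]
  push_cast
  field_simp
section BIN
variable {μ x : ℝ}

lemma term_hasDerivAt (μ : ℝ) (n : ℕ) (y : ℝ) :
    HasDerivAt (fun z : ℝ => pk μ n * z ^ n / n.factorial)
      (pk μ n * ((n:ℝ) * y ^ (n-1)) / n.factorial) y := by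
  simpa [mul_div_assoc] using
    (((hasDerivAt_pow n y).const_mul (pk μ n)).div_const (n.factorial : ℝ))

lemma summable_bin_at (μ : ℝ) {R y : ℝ} (hR0 : 0 < R) (hR1 : R < 1) (hy : |y| ≤ R) :
    Summable (fun n => pk μ n * y ^ n / n.factorial) := by
  apply Summable.of_norm_bounded (summable_pos_bin (by positivity : (0:ℝ) < |μ|+1) hR0 hR1)
  intro n
  have h4 : (0:ℝ) < n.factorial := by exact_mod_cast n.factorial_pos
  rw [Real.norm_eq_abs, abs_div, abs_mul, abs_of_pos h4, abs_pow]
  apply div_le_div_of_nonneg_right _ h4.le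
  apply mul_le_mul ((pk_abs_le μ n).trans (pk_mono (abs_nonneg μ) (by linarith) n))
    (pow_le_pow_left₀ (abs_nonneg y) hy n) (by positivity)
    (le_of_lt (pk_pos (by positivity) n))

lemma binomial_tsum (μ : ℝ) (hx0 : 0 < x) (hx1 : x < 1) :
    ∑' n, pk μ n * x ^ n / n.factorial = (1-x) ^ (-μ) := by
  set R : ℝ := (1+x)/2 with hRdef
  have hR0 : 0 < R := by rw [hRdef]; linarith
  have hR1 : R < 1 := by rw [hRdef]; linarith
  have hxR : x < R := by rw [hRdef]; linarith
  set γ : ℝ := |μ| + 1 with hγdef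
  have hγ : 0 < γ := by positivity
  set u : ℕ → ℝ := fun n => pk γ n * ((n:ℝ) * R ^ (n-1)) / n.factorial with hudef
  have hu : Summable u := summable_deriv_bound hγ hR0 hR1
  set g : ℕ → ℝ → ℝ := fun n z => pk μ n * z ^ n / n.factorial with hgdef
  set g' : ℕ → ℝ → ℝ := fun n y => pk μ n * ((n:ℝ) * y ^ (n-1)) / n.factorial with hg'def
  have hbound : ∀ n, ∀ y ∈ Metric.ball (0:ℝ) R, ‖g' n y‖ ≤ u n := by
    intro n y hy
    rw [Metric.mem_ball, dist_zero_right, Real.norm_eq_abs] at hy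
    have h4 : (0:ℝ) < n.factorial := by exact_mod_cast n.factorial_pos
    rw [hg'def, hudef]
    simp only
    rw [Real.norm_eq_abs, abs_div, abs_mul, abs_of_pos h4, abs_mul, Nat.abs_cast, abs_pow]
    apply div_le_div_of_nonneg_right _ h4.le
    apply mul_le_mul ((pk_abs_le μ n).trans (pk_mono (abs_nonneg μ) (by linarith) n))
      _ (by positivity) (le_of_lt (pk_pos hγ n))
    exact mul_le_mul_of_nonneg_left
      (pow_le_pow_left₀ (abs_nonneg y) hy.le (n-1)) (Nat.cast_nonneg n)
  have hg0 : Summable (fun n => g n 0) := by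
    apply summable_of_ne_finset_zero (s := {0})
    intro n hn
    simp only [Finset.mem_singleton] at hn
    simp [hgdef, zero_pow hn]
  have hball : ∀ y, y ∈ Set.Icc 0 x → y ∈ Metric.ball (0:ℝ) R := by
    intro y hy
    rw [Metric.mem_ball, dist_zero_right, Real.norm_eq_abs, abs_of_nonneg hy.1]
    exact lt_of_le_of_lt hy.2 hxR
  have hderiv : ∀ y ∈ Metric.ball (0:ℝ) R,
      HasDerivAt (fun z => ∑' n, g n z) (∑' n, g' n y) y := by
    intro y hy
    exact hasDerivAt_tsum_of_isPreconnected hu Metric.isOpen_ball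
      (convex_ball _ _).isPreconnected (fun n z _ => term_hasDerivAt μ n z)
      (fun n z hz => hbound n z hz) (Metric.mem_ball_self hR0) hg0 hy
  set h : ℝ → ℝ := fun z => ∑' n, g n z with hhdef
  -- the ODE : (1-y) * D y = μ * h y   for y ∈ ball
  have hode : ∀ y ∈ Metric.ball (0:ℝ) R, (1-y) * (∑' n, g' n y) = μ * h y := by
    intro y hy
    rw [Metric.mem_ball, dist_zero_right, Real.norm_eq_abs] at hy
    have hsummg : Summable (fun n => g n y) := summable_bin_at μ hR0 hR1 hy.le
    have hsummg' : Summable (fun n => g' n y) :=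
      Summable.of_norm_bounded hu (fun n => hbound n y (by
        rw [Metric.mem_ball, dist_zero_right, Real.norm_eq_abs]; exact hy))
    have hsummshift : Summable (fun n => pk μ (n+1) * y ^ n / n.factorial) := by
      apply Summable.of_norm_bounded (summable_shift hγ hR0 hR1)
      intro n
      have h4 : (0:ℝ) < n.factorial := by exact_mod_cast n.factorial_pos
      rw [Real.norm_eq_abs, abs_div, abs_mul, abs_of_pos h4, abs_pow]
      apply div_le_div_of_nonneg_right _ h4.le
      apply mul_le_mul ((pk_abs_le μ (n+1)).trans (pk_mono (abs_nonneg μ) (by linarith) (n+1)))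
        (pow_le_pow_left₀ (abs_nonneg y) hy.le n) (by positivity)
        (le_of_lt (pk_pos hγ (n+1)))
    have hsummn : Summable (fun n : ℕ => (n:ℝ) * pk μ n * y ^ n / n.factorial) := by
      apply Summable.of_norm_bounded hu
      intro n
      have h4 : (0:ℝ) < n.factorial := by exact_mod_cast n.factorial_pos
      have hyR : |y| ^ n ≤ R ^ (n-1) :=
        le_trans (pow_le_pow_left₀ (abs_nonneg y) hy.le n)
          (pow_le_pow_of_le_one hR0.le hR1.le (Nat.sub_le n 1))
      rw [hudef]
      simp only
      rw [Real.norm_eq_abs, abs_div, abs_of_pos h4, abs_mul, abs_mul, Nat.abs_cast, abs_pow]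
      apply div_le_div_of_nonneg_right _ h4.le
      rw [show pk γ n * ((n:ℝ) * R ^ (n-1)) = (n:ℝ) * pk γ n * R ^ (n-1) by ring]
      apply mul_le_mul
      · exact mul_le_mul_of_nonneg_left
          ((pk_abs_le μ n).trans (pk_mono (abs_nonneg μ) (by linarith) n)) (Nat.cast_nonneg n)
      · exact hyR
      · positivity
      · exact mul_nonneg (Nat.cast_nonneg n) (pk_pos hγ n).le
    -- identify the derivative series
    have hDshift : (∑' n, g' n y) = ∑' n : ℕ, pk μ (n+1) * y ^ n / n.factorial := by
      rw [Summable.tsum_eq_zero_add hsummg']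
      have h0 : g' 0 y = 0 := by simp [hg'def]
      rw [h0, zero_add]
      apply tsum_congr
      intro n
      rw [hg'def]
      simp only [Nat.add_sub_cancel, Nat.factorial_succ]
      have h4 : ((n.factorial : ℝ) ≠ 0) := by exact_mod_cast n.factorial_pos.ne'
      have h6 : ((n:ℝ) + 1) ≠ 0 := by positivity
      push_cast
      field_simp
    have hyD : y * (∑' n, g' n y) = ∑' n : ℕ, (n:ℝ) * pk μ n * y ^ n / n.factorial := by
      rw [← tsum_mul_left]
      apply tsum_congr
      intro n
      rw [hg'def]
      cases n with
      | zero => simp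
      | succ m =>
          simp only [Nat.add_sub_cancel]
          rw [pow_succ]
          push_cast
          ring
    have hsub : (1-y) * (∑' n, g' n y)
        = ∑' n : ℕ, (pk μ (n+1) * y ^ n / n.factorial - (n:ℝ) * pk μ n * y ^ n / n.factorial) := by
      rw [sub_mul, one_mul, hyD]
      nth_rewrite 1 [hDshift]
      exact (Summable.tsum_sub hsummshift hsummn).symm
    rw [hsub, hhdef]
    simp only
    rw [← tsum_mul_left]
    apply tsum_congr
    intro n
    rw [hgdef, pk_succ]
    simp only
    ring
  -- φ := h * (1-y)^μ is constant on [0,x]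
  set φ : ℝ → ℝ := fun y => h y * (1-y) ^ μ with hφdef
  have hφderiv : ∀ y ∈ Set.Icc (0:ℝ) x, HasDerivAt φ 0 y := by
    intro y hy
    have h1y : (0:ℝ) < 1 - y := by
      have := hy.2; linarith
    have hd1 : HasDerivAt h (∑' n, g' n y) y := hderiv y (hball y hy)
    have hd2 : HasDerivAt (fun z : ℝ => (1-z) ^ μ) (-1 * μ * (1-y) ^ (μ-1)) y := by
      have hbase : HasDerivAt (fun z : ℝ => 1 - z) (-1) y := by
        simpa using (hasDerivAt_id y).const_sub 1
      exact hbase.rpow_const (Or.inl h1y.ne')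
    have hprod := hd1.mul hd2
    have hzero : (∑' n, g' n y) * (1-y) ^ μ + h y * (-1 * μ * (1-y) ^ (μ-1)) = 0 := by
      have hsplit : (1-y) ^ μ = (1-y) ^ (μ-1) * (1-y) := by
        rw [← Real.rpow_add_one h1y.ne' (μ-1), sub_add_cancel]
      rw [hsplit]
      have hh2 := hode y (hball y hy)
      linear_combination ((1-y) ^ (μ-1)) * hh2
    rw [hzero] at hprod
    exact hprod
  have hcont : ContinuousOn φ (Set.Icc 0 x) := by
    intro y hy
    exact (hφderiv y hy).continuousAt.continuousWithinAt
  have hconst := constant_of_has_deriv_right_zero hcont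
    (fun y hy => (hφderiv y (Set.mem_Icc_of_Ico hy)).hasDerivWithinAt)
  have hφx := hconst x (Set.right_mem_Icc.mpr hx0.le)
  have hφ0 : φ 0 = 1 := by
    rw [hφdef]
    simp only
    rw [sub_zero, Real.one_rpow, mul_one, hhdef]
    simp only
    rw [tsum_eq_single 0 (by
      intro n hn
      simp [hgdef, zero_pow hn])]
    simp [hgdef]
  rw [hφ0] at hφx
  -- conclude
  have h1x : (0:ℝ) < 1 - x := by linarith
  have hμx : (0:ℝ) < (1-x) ^ μ := Real.rpow_pos_of_pos h1x μ
  have hfin : h x = (1-x) ^ (-μ) := by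
    rw [Real.rpow_neg h1x.le]
    field_simp
    rw [hφdef] at hφx
    simp only at hφx
    linarith [hφx]
  rw [← hfin, hhdef]

end BIN
lemma pk_prod (x : ℝ) (n : ℕ) : pk x (n+1) = ∏ j ∈ Finset.range (n+1), (x + j) := by
  induction n with
  | zero => simp [pk]
  | succ n ih => rw [Finset.prod_range_succ, ← ih, pk_succ]

lemma rho_tendsto {A B c s : ℝ} (hA : 0 < A) (hB : 0 < B) (hc : 0 < c) (hs : 0 < s)
    (hsum : A + B = c + s) :
    Tendsto (fun k => pk A k * pk B k / (pk c k * pk s k)) atTop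
      (𝓝 (Real.Gamma c * Real.Gamma s / (Real.Gamma A * Real.Gamma B))) := by
  have hlim : Tendsto (fun n => Real.GammaSeq c n * Real.GammaSeq s n /
      (Real.GammaSeq A n * Real.GammaSeq B n)) atTop
      (𝓝 (Real.Gamma c * Real.Gamma s / (Real.Gamma A * Real.Gamma B))) := by
    apply Tendsto.div ((Real.GammaSeq_tendsto_Gamma c).mul (Real.GammaSeq_tendsto_Gamma s))
      ((Real.GammaSeq_tendsto_Gamma A).mul (Real.GammaSeq_tendsto_Gamma B))
    exact (mul_pos (Real.Gamma_pos_of_pos hA) (Real.Gamma_pos_of_pos hB)).ne'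
  rw [← tendsto_add_atTop_iff_nat 1]
  apply hlim.congr'
  filter_upwards [eventually_ge_atTop 1] with n hn
  have hn0 : (0:ℝ) < n := by exact_mod_cast hn
  have hfact : ((n.factorial : ℝ)) ≠ 0 := by exact_mod_cast n.factorial_pos.ne'
  have hGS : ∀ x : ℝ, Real.GammaSeq x n = (n:ℝ) ^ x * n.factorial / pk x (n+1) := by
    intro x
    rw [Real.GammaSeq, pk_prod]
  have hpow : (n:ℝ) ^ c * (n:ℝ) ^ s = (n:ℝ) ^ A * (n:ℝ) ^ B := by
    rw [← Real.rpow_add hn0, ← Real.rpow_add hn0, hsum]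
  have hpA := (pk_pos hA (n+1)).ne'; have hpB := (pk_pos hB (n+1)).ne'
  have hpc := (pk_pos hc (n+1)).ne'; have hps := (pk_pos hs (n+1)).ne'
  have hrA := (Real.rpow_pos_of_pos hn0 A).ne'; have hrB := (Real.rpow_pos_of_pos hn0 B).ne'
  have hrc := (Real.rpow_pos_of_pos hn0 c).ne'; have hrs := (Real.rpow_pos_of_pos hn0 s).ne'
  rw [hGS, hGS, hGS, hGS]
  field_simp
  linear_combination hpow
/-- Saalschütz divided by `pk c n * n!` -/
lemma Ucoef (a b c : ℝ) (hc : 0 < c) (n : ℕ) :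
    ∑ j ∈ Finset.range (n+1), pk a j * pk b j / (pk c j * j.factorial) *
      (pk (c-a-b) (n-j) / (n-j).factorial)
      = pk (c-a) n * pk (c-b) n / (pk c n * n.factorial) := by
  have hsa := saal a b c (fun j => (by positivity : (0:ℝ) < c + j).ne') n
  rw [← hsa, Finset.sum_div]
  apply Finset.sum_congr rfl
  intro j hj
  have hjn : j ≤ n := by simp at hj; omega
  have hckn : pk c n = pk c j * pk (c + j) (n-j) := by
    have := pk_add c j (n-j)
    rwa [show j + (n-j) = n by omega] at this
  have hfact : ((n.factorial : ℝ)) = (n.choose j : ℝ) * j.factorial * (n-j).factorial := by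
    rw [← Nat.choose_mul_factorial_mul_factorial hjn]
    push_cast; ring
  have h1 := (pk_pos hc j).ne'
  have h2 := (pk_pos (by positivity : (0:ℝ) < c + j) (n-j)).ne'
  have h3 : ((j.factorial : ℝ)) ≠ 0 := by exact_mod_cast j.factorial_pos.ne'
  have h4 : (((n-j).factorial : ℝ)) ≠ 0 := by exact_mod_cast (n-j).factorial_pos.ne'
  have h5 : ((n.choose j : ℝ)) ≠ 0 := by exact_mod_cast (Nat.choose_pos hjn).ne'
  rw [hckn, hfact]
  field_simp

/-- The main general bound -/
theorem F_le (a b c r : ℝ) (hc : 0 < c) (hA : 0 < c - a) (hB : 0 < c - b)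
    (hs : 0 < c - a - b) (hr0 : 0 < r) (hr1 : r < 1) :
    ∑' k : ℕ, pk a k * pk b k / (pk c k * k.factorial) * r ^ k
      ≤ max 1 (Real.Gamma c * Real.Gamma (c-a-b) / (Real.Gamma (c-a) * Real.Gamma (c-b))) := by
  set s : ℝ := c - a - b with hsdef
  set A : ℝ := c - a with hAdef
  set B : ℝ := c - b with hBdef
  set S : ℝ := Real.Gamma c * Real.Gamma s / (Real.Gamma A * Real.Gamma B) with hSdef
  set T : ℕ → ℝ := fun k => pk a k * pk b k / (pk c k * k.factorial) * r ^ k with hTdef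
  set Bn : ℕ → ℝ := fun k => pk s k * r ^ k / k.factorial with hBndef
  set U : ℕ → ℝ := fun k => pk A k * pk B k / (pk c k * k.factorial) * r ^ k with hUdef
  have hfa : ∀ k : ℕ, ((k.factorial : ℝ)) > 0 := fun k => by exact_mod_cast k.factorial_pos
  -- summabilities
  have hTbound : ∀ k, ‖T k‖ ≤ pk (|a|+1) k * pk (|b|+1) k / (pk c k * k.factorial) * r ^ k := by
    intro k
    rw [hTdef]
    simp only
    rw [Real.norm_eq_abs, abs_mul, abs_div, abs_mul, abs_mul,
      abs_of_pos (pk_pos hc k), abs_of_pos (hfa k), abs_pow, abs_of_pos hr0]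
    apply mul_le_mul_of_nonneg_right _ (by positivity)
    apply div_le_div_of_nonneg_right _ (mul_pos (pk_pos hc k) (hfa k)).le
    exact mul_le_mul ((pk_abs_le a k).trans (pk_mono (abs_nonneg a) (by linarith) k))
      ((pk_abs_le b k).trans (pk_mono (abs_nonneg b) (by linarith) k))
      (abs_nonneg _) (pk_pos (by positivity) k).le
  have hTmaj := summable_main (by positivity : (0:ℝ) < |a|+1) (by positivity : (0:ℝ) < |b|+1)
    hc hr0 hr1
  have hTsum : Summable T := Summable.of_norm_bounded hTmaj hTbound
  have hTnorm : Summable (fun k => ‖T k‖) :=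
    Summable.of_norm_bounded hTmaj (fun k => by rw [norm_norm]; exact hTbound k)
  have hBnsum : Summable Bn := by
    apply (summable_pos_bin hs hr0 hr1).congr
    intro k; rw [hBndef]
  have hBnpos : ∀ k, 0 < Bn k := by
    intro k; rw [hBndef]
    have := pk_pos hs k
    positivity
  have hBnnorm : Summable (fun k => ‖Bn k‖) := by
    apply hBnsum.congr
    intro k
    rw [Real.norm_eq_abs, abs_of_pos (hBnpos k)]
  have hUsum : Summable U := by
    apply (summable_main hA hB hc hr0 hr1).congr
    intro k; rw [hUdef]
  -- Cauchy product
  have hkey := tsum_mul_tsum_eq_tsum_sum_range_of_summable_norm hBnnorm hTnorm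
  have hcoef : ∀ k : ℕ, ∑ j ∈ Finset.range (k+1), Bn j * T (k-j) = U k := by
    intro k
    rw [← Finset.sum_range_reflect]
    simp only [Nat.add_sub_cancel]
    have hre : ∀ j ∈ Finset.range (k+1), Bn (k - j) * T (k - (k - j))
        = (pk a j * pk b j / (pk c j * j.factorial) * (pk s (k-j) / (k-j).factorial)) * r ^ k := by
      intro j hj
      have hjk : j ≤ k := by simp at hj; omega
      have e1 : k - (k - j) = j := by omega
      have hrpow : r ^ (k - j) * r ^ j = r ^ k := by rw [← pow_add]; congr 1; omega
      rw [e1, hBndef, hTdef]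
      simp only
      rw [← hrpow]
      have h1 := (pk_pos hc j).ne'
      have h3 : ((j.factorial : ℝ)) ≠ 0 := by exact_mod_cast j.factorial_pos.ne'
      have h4 : (((k-j).factorial : ℝ)) ≠ 0 := by exact_mod_cast (k-j).factorial_pos.ne'
      field_simp
    rw [Finset.sum_congr rfl hre, ← Finset.sum_mul, Ucoef a b c hc k, hUdef]
  have hGeq : (∑' k, Bn k) * (∑' k, T k) = ∑' k, U k := by
    rw [hkey]
    exact tsum_congr hcoef
  -- the value of ∑ Bn
  have hBnval : (∑' k, Bn k) = (1-r) ^ (-s) := binomial_tsum s hr0 hr1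
  have hBpos : (0:ℝ) < (1-r) ^ (-s) := Real.rpow_pos_of_pos (by linarith) _
  -- rho bounds
  set ρ : ℕ → ℝ := fun k => pk A k * pk B k / (pk c k * pk s k) with hρdef
  have hρpos : ∀ k, 0 < ρ k := by
    intro k
    rw [hρdef]
    have h1 := pk_pos hA k; have h2 := pk_pos hB k
    have h3 := pk_pos hc k; have h4 := pk_pos hs k
    positivity
  have hρratio : ∀ k : ℕ, ρ (k+1) * ((c+k)*(s+k)) = ρ k * ((A+k)*(B+k)) := by
    intro k
    rw [hρdef]
    simp only [pk_succ]
    have h3 := (pk_pos hc k).ne'; have h4 := (pk_pos hs k).ne'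
    have h5 : (c + (k:ℝ)) ≠ 0 := by positivity
    have h6 : (s + (k:ℝ)) ≠ 0 := by positivity
    field_simp
  have hab_id : ∀ k : ℕ, (A+(k:ℝ))*(B+k) = (c+k)*(s+k) + a*b := by
    intro k
    rw [hsdef, hAdef, hBdef]
    ring
  have hUρ : ∀ k, U k = ρ k * Bn k := by
    intro k
    rw [hUdef, hρdef, hBndef]
    simp only
    have h3 := (pk_pos hc k).ne'; have h4 := (pk_pos hs k).ne'
    have h5 := (hfa k).ne'
    field_simp
  -- case split on sign of a*b
  have hfinal : ∀ M : ℝ, (∀ k, ρ k ≤ M) → (∑' k, T k) ≤ M := by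
    intro M hM
    have hUb : ∀ k, U k ≤ M * Bn k := by
      intro k
      rw [hUρ k]
      exact mul_le_mul_of_nonneg_right (hM k) (hBnpos k).le
    have h1 : (∑' k, U k) ≤ M * ((1-r) ^ (-s)) := by
      rw [← hBnval, ← tsum_mul_left]
      exact Summable.tsum_le_tsum hUb hUsum (hBnsum.mul_left M)
    rw [← hGeq, hBnval] at h1
    have := (mul_le_mul_iff_right₀ hBpos).mp (by linarith [h1] : (1-r)^(-s) * (∑' k, T k) ≤ (1-r)^(-s) * M)
    exact this
  rcases le_total (a*b) 0 with hab | hab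
  · -- decreasing case : ρ k ≤ 1
    have hmono : ∀ k, ρ (k+1) ≤ ρ k := by
      intro k
      have hr := hρratio k
      have hid := hab_id k
      have hcs : (0:ℝ) < (c+k)*(s+k) := by positivity
      nlinarith [hρpos k, hρpos (k+1)]
    have hρle : ∀ k, ρ k ≤ 1 := by
      intro k
      induction k with
      | zero => rw [hρdef]; simp [pk]
      | succ k ih => exact (hmono k).trans ih
    exact (hfinal 1 hρle).trans (le_max_left _ _)
  · -- increasing case : ρ k ≤ S
    have hmono : Monotone ρ := by
      apply monotone_nat_of_le_succ
      intro k
      have hr := hρratio k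
      have hid := hab_id k
      have hcs : (0:ℝ) < (c+k)*(s+k) := by positivity
      nlinarith [hρpos k, hρpos (k+1)]
    have htend : Tendsto ρ atTop (𝓝 S) := by
      rw [hρdef, hSdef]
      exact rho_tendsto hA hB hc hs (by rw [hsdef, hAdef, hBdef]; ring)
    have hρle : ∀ k, ρ k ≤ S := hmono.ge_of_tendsto htend
    exact (hfinal S hρle).trans (le_max_right _ _)


lemma Hyp_zero_left (a b c r : ℝ) (h : Real.Gamma a = 0) : Hyp a b c r = 0 := by
  simp [Hyp, Poch, h]

lemma Hyp_zero_mid (a b c r : ℝ) (h : Real.Gamma b = 0) : Hyp a b c r = 0 := by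
  simp [Hyp, Poch, h]

theorem stmt18 (n : ℕ) (hn : 3 ≤ n) (β q : ℝ) (hβ : (n : ℝ) ≤ β) (hq : 1 < q)
    (hqβ : (n : ℝ) - 1 < q * β) :
    ∀ r : ℝ, 0 ≤ r → r < 1 →
      Hyp (((n : ℝ) - q * β) / 2) ((n : ℝ) - 1 - q * β / 2) ((n : ℝ) / 2) r ≤
        max 1 (Real.Gamma ((n : ℝ) / 2) * Real.Gamma (q * β - (n : ℝ) + 1) /
          (Real.Gamma (q * β / 2) * Real.Gamma ((q * β - (n : ℝ) + 2) / 2))) := by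
  intro r hr0 hr1
  have hn3 : (3:ℝ) ≤ n := by exact_mod_cast hn
  have hβpos : (0:ℝ) < β := by linarith
  have hqβn : (n:ℝ) < q * β := by nlinarith
  set a : ℝ := ((n:ℝ) - q*β)/2 with hadef
  set b : ℝ := (n:ℝ) - 1 - q*β/2 with hbdef
  set c : ℝ := (n:ℝ)/2 with hcdef
  have h01 : (0:ℝ) ≤ 1 := zero_le_one
  by_cases hga : Real.Gamma a = 0
  · rw [Hyp_zero_left a b c r hga]
    exact le_trans h01 (le_max_left _ _)
  by_cases hgb : Real.Gamma b = 0
  · rw [Hyp_zero_mid a b c r hgb]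
    exact le_trans h01 (le_max_left _ _)
  have hc0 : (0:ℝ) < c := by rw [hcdef]; linarith
  have hgc : Real.Gamma c ≠ 0 := (Real.Gamma_pos_of_pos hc0).ne'
  rcases eq_or_lt_of_le hr0 with hr0' | hr0'
  · -- r = 0
    rw [← hr0']
    have hval : Hyp a b c 0 = 1 := by
      rw [Hyp]
      rw [tsum_eq_single 0 (by
        intro k hk
        simp [zero_pow hk])]
      simp [Poch, div_self hga, div_self hgb, div_self hgc]
    rw [hval]
    exact le_max_left _ _
  · -- main case
    have hA : 0 < c - a := by rw [hcdef, hadef]; linarith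
    have hB : 0 < c - b := by rw [hcdef, hbdef]; linarith
    have hs : 0 < c - a - b := by rw [hcdef, hadef, hbdef]; linarith
    have hconv : Hyp a b c r = ∑' k : ℕ, pk a k * pk b k / (pk c k * k.factorial) * r ^ k := by
      rw [Hyp]
      apply tsum_congr
      intro k
      rw [show Poch a k = pk a k from Poch_eq_pk hga k,
          show Poch b k = pk b k from Poch_eq_pk hgb k,
          show Poch c k = pk c k from Poch_eq_pk hgc k]
      have h1 := (pk_pos hc0 k).ne'
      have h3 : ((k.factorial : ℝ)) ≠ 0 := by exact_mod_cast k.factorial_pos.ne'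
      field_simp
    rw [hconv]
    have := F_le a b c r hc0 hA hB hs hr0' hr1
    have e1 : c - a - b = q*β - n + 1 := by rw [hcdef, hadef, hbdef]; ring
    have e2 : c - a = q*β/2 := by rw [hcdef, hadef]; ring
    have e3 : c - b = (q*β - n + 2)/2 := by rw [hcdef, hbdef]; ring
    rw [e1, e2, e3] at this
    exact this
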